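/- For every n ≥ 1, k ≥ 0 and all points z_0, …, z_{2k} ∈ ℂⁿ (writing z_l = (z_{1,l}, …, z_{n,l})), the trace of the matrix product p_T(z_0)·p_T(z_1)⋯p_T(z_{2k}) equals ∏_{j=1}^{n} ∏_{l=0}^{2k} (1 + conj(z_{j,l})·z_{j,l+1})/(1 + |z_{j,l}|²), where the index l is cyclic, i.e. z_{j,2k+1} := z_{j,0}. -/

import Mathlib

open Complex Matrix

/-- The matrix `p₀(z) := (1+|z|²)⁻¹ · [[|z|², z], [conj z, 1]]`. -/
noncomputable def p0 (z : ℂ) : Matrix (Fin 2) (Fin 2) ℂ :=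
  ((1 + Complex.normSq z : ℝ) : ℂ)⁻¹ •
    !![((Complex.normSq z : ℝ) : ℂ), z; (starRingEnd ℂ) z, 1]

/-- The tensor (Kronecker) product `p_T(z) := p₀(z₁) ⊗ ⋯ ⊗ p₀(z_n)`, realized as a
`2ⁿ×2ⁿ` matrix indexed by `Fin n → Fin 2`, with entries
`p_T(z)_{a,b} = ∏_j p₀(z_j)_{a_j, b_j}`. -/
noncomputable def pT (n : ℕ) (z : Fin n → ℂ) :
    Matrix (Fin n → Fin 2) (Fin n → Fin 2) ℂ :=
  Matrix.of fun a b => ∏ j : Fin n, p0 (z j) (a j) (b j)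

noncomputable def uu (z : ℂ) : Fin 2 → ℂ := ![z, 1]

noncomputable def Vv {n : ℕ} (z : Fin n → ℂ) : (Fin n → Fin 2) → ℂ :=
  fun a => ∏ j, uu (z j) (a j)

lemma p0_entry (z : ℂ) (a b : Fin 2) :
    p0 z a b = ((1 + Complex.normSq z : ℝ) : ℂ)⁻¹ * (uu z a * (starRingEnd ℂ) (uu z b)) := by
  fin_cases a <;> fin_cases b <;>
    simp [p0, uu, Complex.mul_conj]

lemma vmv_mul {ι : Type*} [Fintype ι] (w x w' x' : ι → ℂ) :
    vecMulVec w x * vecMulVec w' x' = (x ⬝ᵥ w') • vecMulVec w x' := by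
  ext i j
  simp only [mul_apply, vecMulVec_apply, Matrix.smul_apply, smul_eq_mul, dotProduct]
  rw [Finset.sum_mul]
  exact Finset.sum_congr rfl fun c _ => by ring

lemma trace_vmv {ι : Type*} [Fintype ι] (w x : ι → ℂ) :
    Matrix.trace (vecMulVec w x) = x ⬝ᵥ w := by
  simp [Matrix.trace, Matrix.diag, vecMulVec_apply, dotProduct, mul_comm]

lemma prod_rank_one {ι : Type*} [Fintype ι] [DecidableEq ι] :
    ∀ (m : ℕ) (w x : Fin (m + 1) → ι → ℂ),
      (List.ofFn fun l => vecMulVec (w l) (x l)).prod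
        = (∏ l : Fin m, x l.castSucc ⬝ᵥ w l.succ) • vecMulVec (w 0) (x (Fin.last m)) := by
  intro m
  induction m with
  | zero => intro w x; simp
  | succ m ih =>
    intro w x
    rw [List.ofFn_succ, List.prod_cons, ih (fun l => w l.succ) (fun l => x l.succ)]
    rw [mul_smul_comm, vmv_mul, smul_smul, Fin.prod_univ_succ]
    simp only [Fin.succ_castSucc, Fin.succ_last, Fin.succ_zero_eq_one]
    rw [mul_comm]
    simp

lemma ofFn_smul_prod {ι : Type*} [Fintype ι] [DecidableEq ι] :
    ∀ (m : ℕ) (c : Fin m → ℂ) (M : Fin m → Matrix ι ι ℂ),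
      (List.ofFn fun l => c l • M l).prod = (∏ l, c l) • (List.ofFn M).prod := by
  intro m
  induction m with
  | zero => intro c M; simp
  | succ m ih =>
    intro c M
    rw [List.ofFn_succ, List.prod_cons, ih (fun l => c l.succ) (fun l => M l.succ),
      Fin.prod_univ_succ, List.ofFn_succ, List.prod_cons]
    rw [smul_mul_assoc, mul_smul_comm, smul_smul]

lemma pT_eq (n : ℕ) (z : Fin n → ℂ) :
    pT n z = (∏ j, ((1 + Complex.normSq (z j) : ℝ) : ℂ)⁻¹) •
      vecMulVec (Vv z) (fun b => (starRingEnd ℂ) (Vv z b)) := by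
  ext a b
  simp only [pT, Matrix.of_apply, Matrix.smul_apply, smul_eq_mul, vecMulVec_apply, Vv, map_prod]
  rw [← Finset.prod_mul_distrib, ← Finset.prod_mul_distrib]
  exact Finset.prod_congr rfl fun j _ => p0_entry _ _ _

lemma dot_Vv {n : ℕ} (z z' : Fin n → ℂ) :
    (fun b => (starRingEnd ℂ) (Vv z b)) ⬝ᵥ Vv z' = ∏ j, (1 + (starRingEnd ℂ) (z j) * z' j) := by
  simp only [dotProduct, Vv, map_prod, ← Finset.prod_mul_distrib]
  rw [← Fintype.prod_sum fun j i => (starRingEnd ℂ) (uu (z j) i) * uu (z' j) i]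
  refine Finset.prod_congr rfl fun j _ => ?_
  rw [Fin.sum_univ_two]
  simp [uu]
  ring

/-- For every `n ≥ 1`, `k ≥ 0` and points `z_0, …, z_{2k} ∈ ℂⁿ`, the trace of the
product `p_T(z_0)⋯p_T(z_{2k})` equals
`∏_{j=1}^{n} ∏_{l=0}^{2k} (1 + conj(z_{j,l})·z_{j,l+1})/(1 + |z_{j,l}|²)`,
with the cyclic convention `z_{j,2k+1} := z_{j,0}`. -/
theorem stmt3 (n k : ℕ) (hn : 1 ≤ n) (z : Fin (2 * k + 1) → Fin n → ℂ) :
    Matrix.trace ((List.ofFn fun l : Fin (2 * k + 1) => pT n (z l)).prod) =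
      ∏ j : Fin n, ∏ l : Fin (2 * k + 1),
        (1 + (starRingEnd ℂ) (z l j) * z (l + 1) j) /
          (1 + ((Complex.normSq (z l j) : ℝ) : ℂ)) := by
  have h1 : (List.ofFn fun l : Fin (2 * k + 1) => pT n (z l)).prod
      = (∏ l : Fin (2 * k + 1), ∏ j, ((1 + Complex.normSq (z l j) : ℝ) : ℂ)⁻¹) •
        (List.ofFn fun l : Fin (2 * k + 1) =>
          vecMulVec (Vv (z l)) (fun b => (starRingEnd ℂ) (Vv (z l) b))).prod := by
    rw [← ofFn_smul_prod]
    exact congrArg (fun f => (List.ofFn f).prod) (funext fun l => pT_eq n (z l))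
  rw [h1, prod_rank_one (2 * k) (fun l => Vv (z l)) (fun l b => (starRingEnd ℂ) (Vv (z l) b)),
    smul_smul, Matrix.trace_smul, trace_vmv, smul_eq_mul]
  -- cyclic product
  have hcyc : (∏ l : Fin (2 * k), (fun b => (starRingEnd ℂ) (Vv (z l.castSucc) b)) ⬝ᵥ Vv (z l.succ))
      * ((fun b => (starRingEnd ℂ) (Vv (z (Fin.last (2 * k))) b)) ⬝ᵥ Vv (z 0))
      = ∏ l : Fin (2 * k + 1), ∏ j, (1 + (starRingEnd ℂ) (z l j) * z (l + 1) j) := by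
    rw [Fin.prod_univ_castSucc
      (f := fun l : Fin (2 * k + 1) => ∏ j, (1 + (starRingEnd ℂ) (z l j) * z (l + 1) j))]
    congr 1
    · refine Finset.prod_congr rfl fun l _ => ?_
      rw [dot_Vv, Fin.coeSucc_eq_succ]
    · rw [dot_Vv, Fin.last_add_one]
  rw [mul_assoc, hcyc, ← Finset.prod_mul_distrib]
  rw [Finset.prod_congr rfl (fun l (_ : l ∈ Finset.univ) =>
    (Finset.prod_mul_distrib (s := Finset.univ)
      (f := fun j => ((1 + Complex.normSq (z l j) : ℝ) : ℂ)⁻¹)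
      (g := fun j => 1 + (starRingEnd ℂ) (z l j) * z (l + 1) j)).symm)]
  rw [Finset.prod_comm]
  refine Finset.prod_congr rfl fun j _ => Finset.prod_congr rfl fun l _ => ?_
  rw [div_eq_mul_inv, mul_comm]
  norm_cast
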